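/- Let G be a finite group with identity e and let S be a subset of G containing e such that |S| divides |G|. If there exist a finite group H with identity e' and a bijection φ : H → S such that φ(e') = e and Θ_G(S) = φ̂(Θ(H)^{|G|/|H|}), then S is a subgroup of G (i.e., S is closed under multiplication and inverses). -/

import Mathlib

set_option maxHeartbeats 1000000

/-- The group determinant `Θ(G)` of a finite group `G`. -/
noncomputable def groupDet (R G : Type*) [CommRing R] [Group G] [Finite G] :
    MvPolynomial G R := by
  classical
  letI := Fintype.ofFinite G
  exact Matrix.det (Matrix.of fun g h : G => MvPolynomial.X (g * h⁻¹))

/-- The generalized group determinant `Θ_G(S)` of a finite group `G` to a subset `S ⊆ G`. -/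
noncomputable def genGroupDet (R G : Type*) [CommRing R] [Group G] [Finite G] (S : Set G) :
    MvPolynomial S R := by
  classical
  letI := Fintype.ofFinite G
  exact Matrix.det (Matrix.of fun g h : G =>
    if hm : g * h⁻¹ ∈ S then MvPolynomial.X (⟨g * h⁻¹, hm⟩ : S) else 0)

open Matrix

section DetLemmas

variable {A : Type*} [CommRing A] {ι : Type*} [Fintype ι] [DecidableEq ι]

lemma detOneAdd {s : A} (hs : s * s = 0) (B : Matrix ι ι A) :
    det (1 + s • B) = 1 + trace B * s := by
  rw [Matrix.det_one_add_smul]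
  simp [pow_two, hs]

lemma detMulOneAdd {s : A} (hs : s * s = 0) (M N R : Matrix ι ι A) (hMN : M * N = 1) :
    det (M + s • R) = det M * (1 + trace (N * R) * s) := by
  have h : M + s • R = M * (1 + s • (N * R)) := by
    rw [mul_add, mul_one, Matrix.mul_smul, ← Matrix.mul_assoc, hMN, Matrix.one_mul]
  rw [h, det_mul, detOneAdd hs]

lemma inv1 {ε : A} (hε : ε * ε = 0) (B : Matrix ι ι A) :
    (1 + ε • B) * (1 - ε • B) = 1 := by
  simp only [mul_sub, mul_add, add_mul, sub_mul, Matrix.smul_mul, Matrix.mul_smul,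
    Matrix.one_mul, Matrix.mul_one, smul_smul]
  match_scalars <;> first
    | (ring_nf; done)
    | (ring_nf; ring_nf at hε; simp [hε])

lemma inv2 {ε δ : A} (hε : ε * ε = 0) (hδ : δ * δ = 0) (B C : Matrix ι ι A) :
    (1 + ε • B + δ • C) * (1 - ε • B - δ • C + (ε * δ) • (B * C + C * B)) = 1 := by
  simp only [mul_sub, mul_add, add_mul, sub_mul, Matrix.smul_mul, Matrix.mul_smul,
    Matrix.one_mul, Matrix.mul_one, smul_smul]
  match_scalars <;> first
    | (ring_nf; done)
    | (ring_nf; ring_nf at hε hδ; simp [hε, hδ])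

end DetLemmas

section PmSection

variable {A : Type*} [CommRing A] {K : Type*} [Group K] [Fintype K] [DecidableEq K]

/-- permutation matrix of left multiplication by `x`. -/
def Pm (A : Type*) [CommRing A] [Group K] [Fintype K] [DecidableEq K] (x : K) : Matrix K K A :=
  Matrix.of fun g h => if g = x * h then 1 else 0

lemma Pm_mul (x y : K) : Pm A x * Pm A y = Pm A (x * y) := by
  ext g h
  simp only [Pm, Matrix.mul_apply, Matrix.of_apply]
  rw [Finset.sum_eq_single (y * h)]
  · simp [mul_assoc]
  · intro l _ hl
    rw [if_neg hl, mul_zero]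
  · simp

lemma trace_Pm (x : K) : trace (Pm A x) = if x = 1 then (Fintype.card K : A) else 0 := by
  by_cases hx : x = 1
  · simp [hx, Pm, trace, diag]
  · simp only [hx, if_false, trace, diag, Pm, Matrix.of_apply]
    apply Finset.sum_eq_zero
    intro g _
    have : g ≠ x * g := fun h => hx (mul_right_cancel (b := g) (by simpa using h.symm))
    rw [if_neg this]

/-- indicator trace value -/
def Tv (A : Type*) [CommRing A] [Group K] [Fintype K] [DecidableEq K] (x : K) : A :=
  if x = 1 then (Fintype.card K : A) else 0

lemma det_key {ε δ ζ : A} (hε : ε * ε = 0) (hδ : δ * δ = 0) (hζ : ζ * ζ = 0)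
    (a b c : K) (ha : a ≠ 1) (hb : b ≠ 1) (hc : c ≠ 1) :
    det (1 + ε • Pm A a + δ • Pm A b + ζ • Pm A c) =
      1 - (ε * δ) * Tv A (a * b) - (ε * ζ) * Tv A (a * c) - (δ * ζ) * Tv A (b * c)
        + (ε * δ * ζ) * (Tv A (a * b * c) + Tv A (b * a * c)) := by
  have tPa : trace (Pm A a) = 0 := by rw [trace_Pm]; exact if_neg ha
  have tPb : trace (Pm A b) = 0 := by rw [trace_Pm]; exact if_neg hb
  have tPc : trace (Pm A c) = 0 := by rw [trace_Pm]; exact if_neg hc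
  have h2 : det (1 + ε • Pm A a + δ • Pm A b) = 1 - (ε * δ) * Tv A (a * b) := by
    rw [detMulOneAdd hδ _ (1 - ε • Pm A a) _ (inv1 hε _), detOneAdd hε, tPa,
      Matrix.sub_mul, Matrix.one_mul, Matrix.smul_mul, Pm_mul, trace_sub, trace_smul, tPb,
      trace_Pm]
    rw [show Tv A (a*b) = if a*b = 1 then (Fintype.card K : A) else 0 from rfl]
    simp only [smul_eq_mul]
    ring
  rw [detMulOneAdd hζ _ (1 - ε • Pm A a - δ • Pm A b
    + (ε * δ) • (Pm A a * Pm A b + Pm A b * Pm A a)) _ ?_, h2]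
  · have htr : trace ((1 - ε • Pm A a - δ • Pm A b
        + (ε * δ) • (Pm A a * Pm A b + Pm A b * Pm A a)) * Pm A c) =
        - ε * Tv A (a * c) - δ * Tv A (b * c) + (ε * δ) * (Tv A (a * b * c) + Tv A (b * a * c)) := by
      rw [Matrix.add_mul, Matrix.sub_mul, Matrix.sub_mul, Matrix.one_mul, Matrix.smul_mul,
        Matrix.smul_mul, Matrix.smul_mul, Matrix.add_mul, Pm_mul, Pm_mul,
        Matrix.mul_assoc, Pm_mul, Pm_mul, Matrix.mul_assoc, Pm_mul, Pm_mul]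
      rw [trace_add, trace_sub, trace_sub, trace_smul, trace_smul, trace_smul, trace_add,
        tPc, trace_Pm, trace_Pm, trace_Pm, trace_Pm]
      rw [show Tv A (a*c) = if a*c = 1 then (Fintype.card K : A) else 0 from rfl,
        show Tv A (b*c) = if b*c = 1 then (Fintype.card K : A) else 0 from rfl,
        show Tv A (a*b*c) = if a*(b*c) = 1 then (Fintype.card K : A) else 0 from by
          rw [mul_assoc]; rfl,
        show Tv A (b*a*c) = if b*(a*c) = 1 then (Fintype.card K : A) else 0 from by
          rw [mul_assoc]; rfl]
      simp only [smul_eq_mul]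
      ring
    rw [htr]
    linear_combination (Tv A (a*b) * Tv A (a*c) * ζ * δ
        - δ * δ * Tv A (a*b) * (Tv A (a*b*c) + Tv A (b*a*c)) * ζ) * hε
      + (Tv A (a*b) * Tv A (b*c) * ζ * ε) * hδ
  · exact inv2 hε hδ _ _

lemma pow_one_add {x : A} (hx : x * x = 0) (k : ℕ) :
    (1 + x) ^ k = 1 + (k : A) * x := by
  induction k with
  | zero => simp
  | succ k ih =>
      rw [pow_succ, ih]
      push_cast
      linear_combination ((k : A)) * hx

end PmSection

noncomputable section QuotientRing
open MvPolynomial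

abbrev Rf : Type := MvPolynomial (Fin 3) ℂ

def Isq : Ideal Rf := Ideal.span {X 0 ^ 2, X 1 ^ 2, X 2 ^ 2}

abbrev A3 : Type := Rf ⧸ Isq

def ee : A3 := Ideal.Quotient.mk Isq (X 0)
def dd : A3 := Ideal.Quotient.mk Isq (X 1)
def zz : A3 := Ideal.Quotient.mk Isq (X 2)

lemma ee_sq : ee * ee = 0 := by
  rw [ee, ← _root_.map_mul, ← pow_two, Ideal.Quotient.eq_zero_iff_mem]
  exact Ideal.subset_span (by simp)

lemma dd_sq : dd * dd = 0 := by
  rw [dd, ← _root_.map_mul, ← pow_two, Ideal.Quotient.eq_zero_iff_mem]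
  exact Ideal.subset_span (by simp)

lemma zz_sq : zz * zz = 0 := by
  rw [zz, ← _root_.map_mul, ← pow_two, Ideal.Quotient.eq_zero_iff_mem]
  exact Ideal.subset_span (by simp)

/-- squarefree monomials have vanishing coefficients on members of `Isq`. -/
lemma coeff_eq_zero_of_mem {p : Rf} (hp : p ∈ Isq) (m : Fin 3 →₀ ℕ) (hm : ∀ i, m i ≤ 1) :
    coeff m p = 0 := by
  induction hp using Submodule.span_induction generalizing m with
  | mem x hx =>
      have key : ∀ i : Fin 3, coeff m (X i ^ 2 : Rf) = 0 := by
        intro i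
        rw [X_pow_eq_monomial, coeff_monomial, if_neg]
        intro hc
        have := hm i
        rw [← hc] at this
        simp [Finsupp.single_apply] at this
      rcases hx with h | h | h <;> subst h <;> exact key _
  | zero => simp
  | add x y _ _ ihx ihy => simp [MvPolynomial.coeff_add, ihx m hm, ihy m hm]
  | smul r x _ ih =>
      rw [smul_eq_mul, MvPolynomial.coeff_mul]
      apply Finset.sum_eq_zero
      rintro ⟨s, t⟩ hst
      rw [Finset.HasAntidiagonal.mem_antidiagonal] at hst
      have ht : ∀ i, t i ≤ 1 := fun i => le_trans (by
        have : s i + t i = m i := by rw [← hst]; simp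
        omega) (hm i)
      rw [ih t ht, mul_zero]

def m01 : Fin 3 →₀ ℕ := Finsupp.single 0 1 + Finsupp.single 1 1
def m02 : Fin 3 →₀ ℕ := Finsupp.single 0 1 + Finsupp.single 2 1
def m12 : Fin 3 →₀ ℕ := Finsupp.single 1 1 + Finsupp.single 2 1
def m012 : Fin 3 →₀ ℕ := Finsupp.single 0 1 + Finsupp.single 1 1 + Finsupp.single 2 1

def Lp (p q r v : ℂ) : Rf :=
  1 - monomial m01 p - monomial m02 q - monomial m12 r + monomial m012 v

lemma m01_apply : ∀ i, m01 i ≤ 1 := by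
  intro i; fin_cases i <;> simp [m01, Finsupp.single_apply]

lemma m02_apply : ∀ i, m02 i ≤ 1 := by
  intro i; fin_cases i <;> simp [m02, Finsupp.single_apply]

lemma m12_apply : ∀ i, m12 i ≤ 1 := by
  intro i; fin_cases i <;> simp [m12, Finsupp.single_apply]

lemma m012_apply : ∀ i, m012 i ≤ 1 := by
  intro i; fin_cases i <;> simp [m012, Finsupp.single_apply]

lemma coeff_Lp_m01 (p q r v : ℂ) : coeff m01 (Lp p q r v) = -p := by
  have h1 : (0 : Fin 3 →₀ ℕ) ≠ m01 := by
    intro h; have := DFunLike.congr_fun h 0; simp [m01, Finsupp.single_apply] at this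
  have h2 : m02 ≠ m01 := by
    intro h; have := DFunLike.congr_fun h 1; simp [m01, m02, Finsupp.single_apply] at this
  have h3 : m12 ≠ m01 := by
    intro h; have := DFunLike.congr_fun h 0; simp [m01, m12, Finsupp.single_apply] at this
  have h4 : m012 ≠ m01 := by
    intro h; have := DFunLike.congr_fun h 2; simp [m01, m012, Finsupp.single_apply] at this
  simp [Lp, coeff_monomial, MvPolynomial.coeff_one, h1, h2, h3, h4]

lemma coeff_Lp_m02 (p q r v : ℂ) : coeff m02 (Lp p q r v) = -q := by
  have h1 : (0 : Fin 3 →₀ ℕ) ≠ m02 := by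
    intro h; have := DFunLike.congr_fun h 0; simp [m02, Finsupp.single_apply] at this
  have h2 : m01 ≠ m02 := by
    intro h; have := DFunLike.congr_fun h 1; simp [m01, m02, Finsupp.single_apply] at this
  have h3 : m12 ≠ m02 := by
    intro h; have := DFunLike.congr_fun h 0; simp [m02, m12, Finsupp.single_apply] at this
  have h4 : m012 ≠ m02 := by
    intro h; have := DFunLike.congr_fun h 1; simp [m02, m012, Finsupp.single_apply] at this
  simp [Lp, coeff_monomial, MvPolynomial.coeff_one, h1, h2, h3, h4]

lemma coeff_Lp_m12 (p q r v : ℂ) : coeff m12 (Lp p q r v) = -r := by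
  have h1 : (0 : Fin 3 →₀ ℕ) ≠ m12 := by
    intro h; have := DFunLike.congr_fun h 1; simp [m12, Finsupp.single_apply] at this
  have h2 : m01 ≠ m12 := by
    intro h; have := DFunLike.congr_fun h 0; simp [m01, m12, Finsupp.single_apply] at this
  have h3 : m02 ≠ m12 := by
    intro h; have := DFunLike.congr_fun h 0; simp [m02, m12, Finsupp.single_apply] at this
  have h4 : m012 ≠ m12 := by
    intro h; have := DFunLike.congr_fun h 0; simp [m12, m012, Finsupp.single_apply] at this
  simp [Lp, coeff_monomial, MvPolynomial.coeff_one, h1, h2, h3, h4]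

lemma coeff_Lp_m012 (p q r v : ℂ) : coeff m012 (Lp p q r v) = v := by
  have h1 : (0 : Fin 3 →₀ ℕ) ≠ m012 := by
    intro h; have := DFunLike.congr_fun h 0; simp [m012, Finsupp.single_apply] at this
  have h2 : m01 ≠ m012 := by
    intro h; have := DFunLike.congr_fun h 2; simp [m01, m012, Finsupp.single_apply] at this
  have h3 : m02 ≠ m012 := by
    intro h; have := DFunLike.congr_fun h 1; simp [m02, m012, Finsupp.single_apply] at this
  have h4 : m12 ≠ m012 := by
    intro h; have := DFunLike.congr_fun h 0; simp [m12, m012, Finsupp.single_apply] at this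
  simp [Lp, coeff_monomial, MvPolynomial.coeff_one, h1, h2, h3, h4]

lemma extract {p q r v p' q' r' v' : ℂ}
    (h : Ideal.Quotient.mk Isq (Lp p q r v) = Ideal.Quotient.mk Isq (Lp p' q' r' v')) :
    p = p' ∧ q = q' ∧ r = r' ∧ v = v' := by
  have hmem : Lp p q r v - Lp p' q' r' v' ∈ Isq := Ideal.Quotient.eq.mp h
  refine ⟨?_, ?_, ?_, ?_⟩
  · have := coeff_eq_zero_of_mem hmem m01 m01_apply
    rw [MvPolynomial.coeff_sub, coeff_Lp_m01, coeff_Lp_m01] at this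
    linear_combination -this
  · have := coeff_eq_zero_of_mem hmem m02 m02_apply
    rw [MvPolynomial.coeff_sub, coeff_Lp_m02, coeff_Lp_m02] at this
    linear_combination -this
  · have := coeff_eq_zero_of_mem hmem m12 m12_apply
    rw [MvPolynomial.coeff_sub, coeff_Lp_m12, coeff_Lp_m12] at this
    linear_combination -this
  · have := coeff_eq_zero_of_mem hmem m012 m012_apply
    rw [MvPolynomial.coeff_sub, coeff_Lp_m012, coeff_Lp_m012] at this
    linear_combination this

lemma X_as_monomial (i : Fin 3) : (X i : Rf) = monomial (Finsupp.single i 1) 1 := by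
  rw [← pow_one (X i : Rf), X_pow_eq_monomial]

lemma toLp (p q r v : ℂ) :
    (1:A3) - (ee*dd) * (Ideal.Quotient.mk Isq (C p))
      - (ee*zz) * (Ideal.Quotient.mk Isq (C q))
      - (dd*zz) * (Ideal.Quotient.mk Isq (C r))
      + (ee*dd*zz) * (Ideal.Quotient.mk Isq (C v))
    = Ideal.Quotient.mk Isq (Lp p q r v) := by
  have h1 : Lp p q r v = 1 - (X 0 * X 1) * C p - (X 0 * X 2) * C q - (X 1 * X 2) * C r
      + (X 0 * X 1 * X 2) * C v := by
    rw [Lp]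
    simp only [X_as_monomial, C_apply, monomial_mul, one_mul, mul_one]
    rw [m01, m02, m12, m012]
    simp [add_zero, zero_add]
  rw [h1]
  simp only [map_sub, map_add, _root_.map_mul, _root_.map_one, ee, dd, zz]

lemma xsq' {A : Type*} [CommRing A] {e d z : A} (he : e*e = 0) (hd : d*d = 0) (hz : z*z = 0)
    (s1 s2 s3 s4 : A) :
    (-(e*d)*s1 - (e*z)*s2 - (d*z)*s3 + (e*d*z)*s4)
      * (-(e*d)*s1 - (e*z)*s2 - (d*z)*s3 + (e*d*z)*s4) = 0 := by
  linear_combination (d*d*s1*s1 + z*z*s2*s2 + d*d*z*z*s4*s4 + 2*d*z*s1*s2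
      - 2*d*d*z*s1*s4 - 2*d*z*z*s2*s4) * he
    + (z*z*s3*s3 + 2*e*z*s1*s3 - 2*e*z*z*s3*s4) * hd
    + (2*e*d*s2*s3) * hz

lemma one_sub_form {A : Type*} [CommRing A] (e d z t1 t2 t3 t4 : A) :
    1 - (e*d)*t1 - (e*z)*t2 - (d*z)*t3 + (e*d*z)*t4
      = 1 + (-(e*d)*t1 - (e*z)*t2 - (d*z)*t3 + (e*d*z)*t4) := by ring

lemma distrib_k {A : Type*} [CommRing A] (κ e d z t1 t2 t3 t4 : A) :
    1 + κ * (-(e*d)*t1 - (e*z)*t2 - (d*z)*t3 + (e*d*z)*t4)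
      = 1 - (e*d)*(κ*t1) - (e*z)*(κ*t2) - (d*z)*(κ*t3) + (e*d*z)*(κ*t4) := by ring

end QuotientRing

section EvalLemmas
open MvPolynomial

variable {A : Type*} [CommRing A] (f : ℂ →+* A)

lemma det_irrel {K R : Type*} [CommRing R] (i1 i2 : Fintype K) (d1 d2 : DecidableEq K)
    (M : Matrix K K R) : @Matrix.det K d1 i1 R _ M = @Matrix.det K d2 i2 R _ M := by
  cases Subsingleton.elim i1 i2
  cases Subsingleton.elim d1 d2
  rfl

lemma eval_groupDet {K : Type*} [Group K] [Fintype K] [DecidableEq K] (w : K → A) :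
    eval₂ f w (groupDet ℂ K) = det (Matrix.of fun g h : K => w (g * h⁻¹)) := by
  have hg : groupDet ℂ K = det (Matrix.of fun g h : K => MvPolynomial.X (g * h⁻¹)) := by
    unfold groupDet
    exact det_irrel _ _ _ _ _
  rw [hg, ← MvPolynomial.coe_eval₂Hom, RingHom.map_det]
  congr 1
  ext g h
  simp [RingHom.mapMatrix_apply]

lemma eval_genGroupDet {G : Type*} [Group G] [Fintype G] [DecidableEq G] (S : Set G)
    [∀ x : G, Decidable (x ∈ S)] (v : S → A) :
    eval₂ f v (genGroupDet ℂ G S) =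
      det (Matrix.of fun g h : G => if hm : g * h⁻¹ ∈ S then v ⟨g * h⁻¹, hm⟩ else 0) := by
  have hg : genGroupDet ℂ G S = det (Matrix.of fun g h : G =>
      if hm : g * h⁻¹ ∈ S then MvPolynomial.X (⟨g * h⁻¹, hm⟩ : S) else 0) := by
    unfold genGroupDet
    refine Eq.trans (det_irrel _ ‹Fintype G› _ ‹DecidableEq G› _) ?_
    congr 1
    ext g h : 2
    congr 1
    simp only [Matrix.of_apply]
    exact dite_congr rfl (fun _ => rfl) (fun _ => rfl)
  rw [hg, ← MvPolynomial.coe_eval₂Hom, RingHom.map_det]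
  congr 1
  ext g h
  simp only [RingHom.mapMatrix_apply, Matrix.map_apply, Matrix.of_apply]
  split
  · simp
  · simp

end EvalLemmas

section MatLemmas
variable {A : Type*} [CommRing A]

lemma matrixK {K : Type*} [Group K] [Fintype K] [DecidableEq K] (ε δ ζ : A) (a b c : K) :
    (Matrix.of fun g h : K => (if g * h⁻¹ = 1 then (1:A) else 0) + (if g * h⁻¹ = a then ε else 0)
      + (if g * h⁻¹ = b then δ else 0) + (if g * h⁻¹ = c then ζ else 0))
    = 1 + ε • Pm A a + δ • Pm A b + ζ • Pm A c := by
  ext g h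
  simp only [Matrix.of_apply, Matrix.add_apply, Matrix.smul_apply, Matrix.one_apply, Pm,
    smul_ite, smul_zero, smul_eq_mul, mul_one, Matrix.of_apply]
  have e0 : (g * h⁻¹ = 1) = (g = h) := propext mul_inv_eq_one
  have ea : (g * h⁻¹ = a) = (g = a * h) := propext (mul_inv_eq_iff_eq_mul)
  have eb : (g * h⁻¹ = b) = (g = b * h) := propext (mul_inv_eq_iff_eq_mul)
  have ec : (g * h⁻¹ = c) = (g = c * h) := propext (mul_inv_eq_iff_eq_mul)
  simp only [e0, ea, eb, ec, mul_ite, mul_one, mul_zero]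

lemma matrixG {G : Type*} [Group G] [Fintype G] [DecidableEq G] (S : Set G)
    [∀ x : G, Decidable (x ∈ S)] (h1S : (1:G) ∈ S)
    (ε δ ζ : A) (a b c : G) (ha : a ∈ S) (hb : b ∈ S) (hc : c ∈ S) :
    (Matrix.of fun g h : G => if hm : g * h⁻¹ ∈ S then
        ((if ((⟨g * h⁻¹, hm⟩ : S) : G) = 1 then (1:A) else 0)
          + (if ((⟨g * h⁻¹, hm⟩ : S) : G) = a then ε else 0)
          + (if ((⟨g * h⁻¹, hm⟩ : S) : G) = b then δ else 0)
          + (if ((⟨g * h⁻¹, hm⟩ : S) : G) = c then ζ else 0)) else 0)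
    = 1 + ε • Pm A a + δ • Pm A b + ζ • Pm A c := by
  rw [← matrixK]
  ext g h
  simp only [Matrix.of_apply]
  by_cases hm : g * h⁻¹ ∈ S
  · rw [dif_pos hm]
  · rw [dif_neg hm]
    have n0 : ¬(g * h⁻¹ = 1) := fun e => hm (e ▸ h1S)
    have na : ¬(g * h⁻¹ = a) := fun e => hm (e ▸ ha)
    have nb : ¬(g * h⁻¹ = b) := fun e => hm (e ▸ hb)
    have nc : ¬(g * h⁻¹ = c) := fun e => hm (e ▸ hc)
    rw [if_neg n0, if_neg na, if_neg nb, if_neg nc]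
    simp

end MatLemmas

/-- If `S ⊆ G` contains `e`, `|S| ∣ |G|`, and there are a finite group `H` and a bijection
`φ : H → S` with `φ(e') = e` and `Θ_G(S) = φ̂(Θ(H)^{|G|/|H|})`, then `S` is a subgroup of `G`
(closed under multiplication and inverses). -/
theorem genGroupDet_eq_pow_imp_subgroup {G : Type*} [Group G] [Fintype G]
    (S : Set G) (h1S : (1 : G) ∈ S) (hdvd : Nat.card S ∣ Fintype.card G)
    (H : Type*) [Group H] [Fintype H] (φ : H → S)
    (hbij : Function.Bijective φ) (h1 : φ 1 = ⟨1, h1S⟩)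
    (hdet : genGroupDet ℂ G S =
      MvPolynomial.rename φ ((groupDet ℂ H) ^ (Fintype.card G / Fintype.card H))) :
    (∀ a ∈ S, ∀ b ∈ S, a * b ∈ S) ∧ ∀ a ∈ S, a⁻¹ ∈ S := by
  classical
  open MvPolynomial in
  set n := Fintype.card G with hn
  set m := Fintype.card H with hmdef
  set k := n / m with hk
  have hmS : Nat.card S = m := by
    rw [← Nat.card_eq_of_bijective φ hbij, Nat.card_eq_fintype_card]
  have hdvd' : m ∣ n := hmS ▸ hdvd
  have hkm : k * m = n := Nat.div_mul_cancel hdvd'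
  set ψ : H → G := fun x => ((φ x : S) : G) with hψdef
  have hψS : ∀ x, ψ x ∈ S := fun x => (φ x).2
  have hψ1 : ψ 1 = 1 := by rw [hψdef]; simp [h1]
  have hψinj : Function.Injective ψ := fun x y hxy =>
    hbij.injective (Subtype.ext hxy)
  have hn0 : (n : ℂ) ≠ 0 := by
    simp only [hn]
    exact_mod_cast Fintype.card_ne_zero
  -- the key analytic identity
  have key : ∀ u v w : H, u ≠ 1 → v ≠ 1 → w ≠ 1 →
      ((ψ u * ψ v = 1) ↔ (u * v = 1)) ∧
      (((if ψ u * ψ v * ψ w = 1 then (1:ℂ) else 0) + (if ψ v * ψ u * ψ w = 1 then (1:ℂ) else 0))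
        = ((if u * v * w = 1 then (1:ℂ) else 0) + (if v * u * w = 1 then (1:ℂ) else 0))) := by
    intro u v w hu hv hw
    have hau : ψ u ≠ 1 := fun h => hu (hψinj (h.trans hψ1.symm))
    have hav : ψ v ≠ 1 := fun h => hv (hψinj (h.trans hψ1.symm))
    have haw : ψ w ≠ 1 := fun h => hw (hψinj (h.trans hψ1.symm))
    set f : ℂ →+* A3 := (Ideal.Quotient.mk Isq).comp (MvPolynomial.C) with hf
    have hEq := congrArg (eval₂ f (fun s : S => (if (s : G) = 1 then (1:A3) else 0)
      + (if (s : G) = ψ u then ee else 0) + (if (s : G) = ψ v then dd else 0)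
      + (if (s : G) = ψ w then zz else 0))) hdet
    rw [eval_genGroupDet, eval₂_rename, ← MvPolynomial.coe_eval₂Hom, map_pow,
      MvPolynomial.coe_eval₂Hom] at hEq
    have hHside : eval₂ f ((fun s : S => (if (s : G) = 1 then (1:A3) else 0)
        + (if (s : G) = ψ u then ee else 0) + (if (s : G) = ψ v then dd else 0)
        + (if (s : G) = ψ w then zz else 0)) ∘ φ) (groupDet ℂ H)
        = det (1 + ee • Pm A3 u + dd • Pm A3 v + zz • Pm A3 w) := by
      rw [eval_groupDet]
      rw [show (Matrix.of fun g h : H => ((fun s : S => (if (s : G) = 1 then (1:A3) else 0)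
        + (if (s : G) = ψ u then ee else 0) + (if (s : G) = ψ v then dd else 0)
        + (if (s : G) = ψ w then zz else 0)) ∘ φ) (g * h⁻¹))
        = Matrix.of fun g h : H => (if g * h⁻¹ = 1 then (1:A3) else 0)
          + (if g * h⁻¹ = u then ee else 0) + (if g * h⁻¹ = v then dd else 0)
          + (if g * h⁻¹ = w then zz else 0) from ?_, matrixK]
      ext g h
      simp only [Matrix.of_apply, Function.comp_apply]
      have ecu : ∀ x y : H, ((φ x : S) : G) = ψ y ↔ x = y := by
        intro x y
        constructor
        · intro hh; exact hψinj hh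
        · intro hh; rw [hh]
      have ec1 : ∀ x : H, (((φ x : S) : G) = 1) = (x = 1) := by
        intro x
        rw [← hψ1]
        exact propext (ecu x 1)
      rw [ec1, propext (ecu _ u), propext (ecu _ v), propext (ecu _ w)]
    rw [hHside] at hEq
    have hGside : (Matrix.of fun g h : G =>
        if hm : g * h⁻¹ ∈ S then (fun s : S => (if (s : G) = 1 then (1:A3) else 0)
          + (if (s : G) = ψ u then ee else 0) + (if (s : G) = ψ v then dd else 0)
          + (if (s : G) = ψ w then zz else 0)) (⟨g * h⁻¹, hm⟩ : S) else 0)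
        = 1 + ee • Pm A3 (ψ u) + dd • Pm A3 (ψ v) + zz • Pm A3 (ψ w) := by
      exact matrixG S h1S ee dd zz (ψ u) (ψ v) (ψ w) (hψS u) (hψS v) (hψS w)
    rw [hGside] at hEq
    rw [det_key ee_sq dd_sq zz_sq _ _ _ hau hav haw,
      det_key ee_sq dd_sq zz_sq _ _ _ hu hv hw] at hEq
    -- convert both sides to mk (Lp ...)
    have tvG : ∀ x : G, Tv A3 x = Ideal.Quotient.mk Isq (C (if x = 1 then (n:ℂ) else 0)) := by
      intro x
      rw [Tv]
      split_ifs with hx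
      · rw [show ((C ((n:ℕ):ℂ)) : Rf) = ((n : ℕ) : Rf) from map_natCast (MvPolynomial.C : ℂ →+* Rf) n, map_natCast]
      · simp
    have tvH : ∀ x : H, (k : A3) * Tv A3 x
        = Ideal.Quotient.mk Isq (C (if x = 1 then (n:ℂ) else 0)) := by
      intro x
      rw [Tv]
      split_ifs with hx
      · rw [show ((C ((n:ℕ):ℂ)) : Rf) = ((n : ℕ) : Rf) from map_natCast (MvPolynomial.C : ℂ →+* Rf) n, map_natCast]
        show (k:A3) * (m:A3) = (n:A3)
        rw [← Nat.cast_mul, hkm]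
      · simp
    have hL : (1:A3) - (ee*dd) * Tv A3 (ψ u * ψ v) - (ee*zz) * Tv A3 (ψ u * ψ w)
        - (dd*zz) * Tv A3 (ψ v * ψ w)
        + (ee*dd*zz) * (Tv A3 (ψ u * ψ v * ψ w) + Tv A3 (ψ v * ψ u * ψ w))
        = Ideal.Quotient.mk Isq (Lp (if ψ u * ψ v = 1 then (n:ℂ) else 0)
            (if ψ u * ψ w = 1 then (n:ℂ) else 0)
            (if ψ v * ψ w = 1 then (n:ℂ) else 0)
            ((if ψ u * ψ v * ψ w = 1 then (n:ℂ) else 0)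
              + (if ψ v * ψ u * ψ w = 1 then (n:ℂ) else 0))) := by
      rw [tvG, tvG, tvG, tvG, tvG,
        show Ideal.Quotient.mk Isq (C (if ψ u * ψ v * ψ w = 1 then (n:ℂ) else 0))
            + Ideal.Quotient.mk Isq (C (if ψ v * ψ u * ψ w = 1 then (n:ℂ) else 0))
          = Ideal.Quotient.mk Isq (C ((if ψ u * ψ v * ψ w = 1 then (n:ℂ) else 0)
              + (if ψ v * ψ u * ψ w = 1 then (n:ℂ) else 0))) by rw [map_add, map_add],
        toLp]
    have hR : ((1:A3) - (ee*dd) * Tv A3 (u * v) - (ee*zz) * Tv A3 (u * w)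
        - (dd*zz) * Tv A3 (v * w)
        + (ee*dd*zz) * (Tv A3 (u * v * w) + Tv A3 (v * u * w))) ^ k
        = Ideal.Quotient.mk Isq (Lp (if u * v = 1 then (n:ℂ) else 0)
            (if u * w = 1 then (n:ℂ) else 0)
            (if v * w = 1 then (n:ℂ) else 0)
            ((if u * v * w = 1 then (n:ℂ) else 0)
              + (if v * u * w = 1 then (n:ℂ) else 0))) := by
      rw [one_sub_form, pow_one_add (xsq' ee_sq dd_sq zz_sq _ _ _ _), distrib_k,
        mul_add (k : A3), tvH, tvH, tvH, tvH, tvH,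
        show Ideal.Quotient.mk Isq (C (if u * v * w = 1 then (n:ℂ) else 0))
            + Ideal.Quotient.mk Isq (C (if v * u * w = 1 then (n:ℂ) else 0))
          = Ideal.Quotient.mk Isq (C ((if u * v * w = 1 then (n:ℂ) else 0)
              + (if v * u * w = 1 then (n:ℂ) else 0))) by rw [map_add, map_add],
        toLp]
    obtain ⟨eP, _, _, eV⟩ := extract ((hL.symm.trans hEq).trans hR)
    constructor
    · constructor
      · intro hab
        by_contra huv
        rw [if_pos hab, if_neg huv] at eP
        exact hn0 eP
      · intro huv
        by_contra hab
        rw [if_neg hab, if_pos huv] at eP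
        exact hn0 eP.symm
    · have iten : ∀ (c : Prop) (_ : Decidable c),
          (if c then (n:ℂ) else 0) = n * (if c then 1 else 0) := by
        intro c hc
        split_ifs <;> ring
      rw [iten _ _, iten _ _, iten _ _, iten _ _, ← mul_add, ← mul_add] at eV
      exact mul_left_cancel₀ hn0 eV
  -- endgame
  have hinv : ∀ x : H, ψ (x⁻¹) = (ψ x)⁻¹ := by
    intro x
    by_cases hx : x = 1
    · rw [hx, inv_one, hψ1, inv_one]
    · have h := ((key x x⁻¹ x hx (fun e => hx (by rw [← inv_inv x, e, inv_one])) hx).1).mpr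
        (mul_inv_cancel x)
      exact (mul_eq_one_iff_inv_eq.mp h).symm
  have hinvS : ∀ a ∈ S, a⁻¹ ∈ S := by
    intro a ha
    obtain ⟨x, hx⟩ := hbij.surjective ⟨a, ha⟩
    have hxa : ψ x = a := by rw [hψdef]; simp [hx]
    rw [← hxa, ← hinv]
    exact hψS _
  refine ⟨?_, hinvS⟩
  intro a ha b hb
  obtain ⟨x, hx⟩ := hbij.surjective ⟨a, ha⟩
  obtain ⟨y, hy⟩ := hbij.surjective ⟨b, hb⟩
  have hxa : ψ x = a := by rw [hψdef]; simp [hx]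
  have hyb : ψ y = b := by rw [hψdef]; simp [hy]
  by_cases hx1 : x = 1
  · rw [← hxa, hx1, hψ1, one_mul]; exact hb
  by_cases hy1 : y = 1
  · rw [← hyb, hy1, hψ1, mul_one]; exact ha
  by_cases hxy : x * y = 1
  · have hyx : y = x⁻¹ := by
      rw [← inv_inv y, ← eq_inv_of_mul_eq_one_left hxy]
    have : a * b = 1 := by
      rw [← hxa, ← hyb, hyx, hinv, mul_inv_cancel]
    rw [this]; exact h1S
  · have hwne : (x*y)⁻¹ ≠ 1 := fun e => hxy (by rw [← inv_inv (x*y), e, inv_one])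
    have k1 := (key x y (x*y)⁻¹ hx1 hy1 hwne).2
    rw [if_pos (mul_inv_cancel (x*y))] at k1
    by_cases hA : ψ x * ψ y * ψ (x*y)⁻¹ = 1
    · have : a * b = ψ (x * y) := by
        rw [← hxa, ← hyb]
        have h' := eq_inv_of_mul_eq_one_left hA
        rw [hinv, inv_inv] at h'
        exact h'
      rw [this]; exact hψS _
    · rw [if_neg hA, zero_add] at k1
      have hBfull : ψ y * ψ x * ψ (x*y)⁻¹ = 1 ∧ ¬ (y * x * (x*y)⁻¹ = 1) := by
        by_cases hB1 : ψ y * ψ x * ψ (x*y)⁻¹ = 1 <;> by_cases hB2 : y * x * (x*y)⁻¹ = 1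
        · exfalso; rw [if_pos hB1, if_pos hB2] at k1; norm_num at k1
        · exact ⟨hB1, hB2⟩
        · exfalso; rw [if_neg hB1, if_pos hB2] at k1; norm_num at k1
        · exfalso; rw [if_neg hB1, if_neg hB2] at k1; norm_num at k1
      obtain ⟨hB, hcomm⟩ := hBfull
      have hyx1 : y * x ≠ 1 := fun e => hxy (by
        rw [eq_inv_of_mul_eq_one_right e]
        simp)
      have hw'ne : (y*x)⁻¹ ≠ 1 := fun e => hyx1 (by rw [← inv_inv (y*x), e, inv_one])
      have k2 := (key y x (y*x)⁻¹ hy1 hx1 hw'ne).2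
      rw [if_pos (mul_inv_cancel (y*x))] at k2
      have hxyyx : ¬ (x*y*(y*x)⁻¹ = 1) := by
        intro e
        have hcm : x*y = y*x := by
          rw [← inv_inv (y*x), ← eq_inv_of_mul_eq_one_left e]
        exact hcomm (by rw [hcm, mul_inv_cancel])
      rw [if_neg hxyyx, add_zero] at k2
      by_cases hC : ψ x * ψ y * ψ (y*x)⁻¹ = 1
      · have : a * b = ψ (y * x) := by
          rw [← hxa, ← hyb]
          have h' := eq_inv_of_mul_eq_one_left hC
          rw [hinv, inv_inv] at h'
          exact h'
        rw [this]; exact hψS _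
      · exfalso
        rw [if_neg hC, add_zero] at k2
        have hD : ψ y * ψ x * ψ (y*x)⁻¹ = 1 := by
          by_contra hD'
          rw [if_neg hD'] at k2
          norm_num at k2
        have e1 := eq_inv_of_mul_eq_one_left hB
        rw [hinv, inv_inv] at e1
        have e2 := eq_inv_of_mul_eq_one_left hD
        rw [hinv, inv_inv] at e2
        have hcm : x * y = y * x := hψinj (e1.symm.trans e2)
        exact hcomm (by rw [← hcm] at e2 ⊢; rw [hcm, mul_inv_cancel])
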